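/- Let X and Y be real Banach spaces with the approximation property and let k ∈ ℕ. Then for every k-times continuously Fréchet differentiable map F : X → Y, all compact sets K, K' ⊆ X, and every ε > 0, there exist finite-rank continuous linear operators S : X → X and T : Y → Y such that for every 0 ≤ i ≤ k: sup_{x ∈ K, h^1, …, h^i ∈ K'} ‖D^i F(x)(h^1, …, h^i) − T(D^i F(S x)(S h^1, …, S h^i))‖_Y < ε. (The map T ∘ F ∘ S is k-times continuously Fréchet differentiable with i-th derivative at x given by (h^1, …, h^i) ↦ T(D^i F(Sx)(Sh^1, …, Sh^i)), so this says cylindrical approximations of F approximate F and all its derivatives up to order k uniformly on compacts.) -/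

import Mathlib

open MeasureTheory
open scoped Topology ENNReal NNReal

/-- A real Banach space `Z` has the approximation property: every compact set can be
uniformly approximated to arbitrary precision by a finite-rank continuous linear operator. -/
def HasApproxProperty (Z : Type*) [NormedAddCommGroup Z] [NormedSpace ℝ Z] : Prop :=
  ∀ K : Set Z, IsCompact K → ∀ ε : ℝ, 0 < ε →
    ∃ S : Z →L[ℝ] Z, FiniteDimensional ℝ (LinearMap.range (S : Z →ₗ[ℝ] Z)) ∧ ∀ z ∈ K, ‖z - S z‖ < ε

/-- Uniform continuity near a compact set, metric form. -/
lemma aux_unif {E F : Type*} [PseudoMetricSpace E] [PseudoMetricSpace F] {s : Set E}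
    (hs : IsCompact s) {f : E → F} (hf : Continuous f) {η : ℝ} (hη : 0 < η) :
    ∃ δ > 0, ∀ x ∈ s, ∀ y, dist x y < δ → dist (f x) (f y) < η := by
  have H := hs.uniformContinuousAt_of_continuousAt f (fun a _ => hf.continuousAt)
    (Metric.dist_mem_uniformity hη)
  rw [Metric.mem_uniformity_dist] at H
  obtain ⟨δ, hδ, H⟩ := H
  exact ⟨δ, hδ, fun x hx y hxy => H hxy hx⟩

theorem stmt_3 {X Y : Type*} [NormedAddCommGroup X] [NormedSpace ℝ X] [CompleteSpace X]
    [NormedAddCommGroup Y] [NormedSpace ℝ Y] [CompleteSpace Y]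
    (hX : HasApproxProperty X) (hY : HasApproxProperty Y) (k : ℕ)
    (F : X → Y) (hF : ContDiff ℝ k F)
    (K K' : Set X) (hK : IsCompact K) (hK' : IsCompact K')
    (ε : ℝ) (hε : 0 < ε) :
    ∃ (S : X →L[ℝ] X) (T : Y →L[ℝ] Y),
      FiniteDimensional ℝ (LinearMap.range (S : X →ₗ[ℝ] X)) ∧
      FiniteDimensional ℝ (LinearMap.range (T : Y →ₗ[ℝ] Y)) ∧
      ∀ i ≤ k, ∀ x ∈ K, ∀ h : Fin i → X, (∀ j, h j ∈ K') →
        ‖iteratedFDeriv ℝ i F x h -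
          T (iteratedFDeriv ℝ i F (S x) (fun j => S (h j)))‖ < ε := by
  classical
  -- the bundled family of derivatives up to order k
  set G : X → (∀ i : Fin (k + 1), ContinuousMultilinearMap ℝ (fun _ : Fin (i : ℕ) => X) Y) :=
    fun x i => iteratedFDeriv ℝ (i : ℕ) F x with hG
  have hGcont : Continuous G := by
    refine continuous_pi fun i => ?_
    exact hF.continuous_iteratedFDeriv (by exact_mod_cast Nat.le_of_lt_succ i.isLt)
  -- bound for the derivatives on K
  obtain ⟨M, hM⟩ : ∃ M, ∀ z ∈ G '' K, ‖z‖ ≤ M :=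
    isBounded_iff_forall_norm_le.mp (hK.image hGcont).isBounded
  set M' : ℝ := max M 0 with hM'
  have hM'0 : 0 ≤ M' := le_max_right _ _
  have hMK : ∀ x ∈ K, ‖G x‖ ≤ M' := fun x hx =>
    le_trans (hM _ (Set.mem_image_of_mem _ hx)) (le_max_left _ _)
  -- bound for K'
  obtain ⟨R, hR⟩ : ∃ R, ∀ z ∈ K', ‖z‖ ≤ R := isBounded_iff_forall_norm_le.mp hK'.isBounded
  set R' : ℝ := max R 1 with hR'
  have hR1 : (1 : ℝ) ≤ R' := le_max_right _ _
  have hR0 : (0 : ℝ) < R' := lt_of_lt_of_le one_pos hR1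
  have hRK : ∀ z ∈ K', ‖z‖ ≤ R' := fun z hz => le_trans (hR z hz) (le_max_left _ _)
  -- choose η
  set η : ℝ := min 1 (ε / 4 / R' ^ k) with hη
  have hη0 : 0 < η := lt_min one_pos (div_pos (by linarith) (pow_pos hR0 k))
  have hη1 : η ≤ 1 := min_le_left _ _
  -- uniform continuity of G near K
  obtain ⟨δ₁, hδ₁0, hδ₁⟩ := aux_unif hK hGcont hη0
  -- choose δ
  set C : ℝ := (k : ℝ) * (M' + 1) * (R' + 1) ^ k with hC
  have hC0 : 0 ≤ C := by positivity
  set δ : ℝ := min 1 (min δ₁ (ε / 4 / (C + 1))) with hδ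
  have hδ0 : 0 < δ := lt_min one_pos (lt_min hδ₁0 (div_pos (by linarith) (by linarith)))
  have hδle1 : δ ≤ 1 := min_le_left _ _
  have hδleδ₁ : δ ≤ δ₁ := le_trans (min_le_right _ _) (min_le_left _ _)
  have hδleC : δ ≤ ε / 4 / (C + 1) := le_trans (min_le_right _ _) (min_le_right _ _)
  -- choose S
  obtain ⟨S, hSfin, hS⟩ := hX (K ∪ K') (hK.union hK') δ hδ0
  -- key: G is η-close at `S x` for x ∈ K
  have hGS : ∀ x ∈ K, ‖G x - G (S x)‖ < η := by
    intro x hx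
    have := hδ₁ x hx (S x) (by
      rw [dist_eq_norm]
      exact lt_of_lt_of_le (hS x (Or.inl hx)) hδleδ₁)
    rwa [dist_eq_norm] at this
  -- the compact set of values in Y
  set L : Set Y := ⋃ i ∈ Finset.range (k + 1),
    (fun p : X × (Fin i → X) =>
      iteratedFDeriv ℝ i F (S p.1) (fun j => S (p.2 j))) '' (K ×ˢ Set.univ.pi fun _ => K') with hL
  have hLc : IsCompact L := by
    refine (Finset.range (k + 1)).finite_toSet.isCompact_biUnion fun i hi => ?_
    have hik : (i : WithTop ℕ∞) ≤ (k : WithTop ℕ∞) := by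
      exact_mod_cast Nat.le_of_lt_succ (Finset.mem_range.mp hi)
    refine IsCompact.image (hK.prod (isCompact_univ_pi fun _ => hK')) ?_
    have h1 : Continuous fun p : X × (Fin i → X) => iteratedFDeriv ℝ i F (S p.1) :=
      (hF.continuous_iteratedFDeriv hik).comp (S.continuous.comp continuous_fst)
    have h2 : Continuous fun p : X × (Fin i → X) => (fun j => S (p.2 j)) :=
      continuous_pi fun j => S.continuous.comp ((continuous_apply j).comp continuous_snd)
    exact continuous_eval.comp (h1.prodMk h2)
  -- choose T
  obtain ⟨T, hTfin, hT⟩ := hY L hLc (ε / 2) (by linarith)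
  refine ⟨S, T, hSfin, hTfin, fun i hik x hx h hh => ?_⟩
  set g : X → ContinuousMultilinearMap ℝ (fun _ : Fin i => X) Y := iteratedFDeriv ℝ i F with hg
  set b : Y := g (S x) (fun j => S (h j)) with hb
  -- membership of b in L
  have hbL : b ∈ L := by
    rw [hL]
    refine Set.mem_biUnion (Finset.mem_range.mpr (Nat.lt_succ_of_le hik)) ?_
    exact ⟨(x, h), ⟨hx, fun j _ => hh j⟩, rfl⟩
  have hTb : ‖b - T b‖ < ε / 2 := hT b hbL
  -- component bound from the bundled map
  have hfin : i < k + 1 := Nat.lt_succ_of_le hik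
  have hcomp : ∀ y z : X, ‖g y - g z‖ ≤ ‖G y - G z‖ := by
    intro y z
    have := norm_le_pi_norm (G y - G z) ⟨i, hfin⟩
    simpa using this
  -- closeness of g x and g (S x)
  have hgS : ‖g x - g (S x)‖ ≤ η := le_trans (hcomp x (S x)) (le_of_lt (hGS x hx))
  have hgxM : ‖g x‖ ≤ M' := le_trans (norm_le_pi_norm (G x) ⟨i, hfin⟩) (hMK x hx)
  have hgSM : ‖g (S x)‖ ≤ M' + 1 := by
    have : ‖g (S x)‖ ≤ ‖g x‖ + ‖g x - g (S x)‖ := by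
      have := norm_sub_norm_le (g x) (g (S x)); linarith [abs_le.mp (abs_norm_sub_norm_le (g x) (g (S x)))]
    linarith [hη1]
  -- bounds on h and S h
  have hhR : ∀ j, ‖h j‖ ≤ R' := fun j => hRK _ (hh j)
  have hShd : ∀ j, ‖h j - S (h j)‖ ≤ δ := fun j => le_of_lt (hS _ (Or.inr (hh j)))
  have hShR : ∀ j, ‖S (h j)‖ ≤ R' + 1 := by
    intro j
    calc ‖S (h j)‖ ≤ ‖h j‖ + ‖h j - S (h j)‖ := by
          have := norm_sub_le (h j) (h j - S (h j)); simpa using this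
      _ ≤ R' + 1 := add_le_add (hhR j) (le_trans (hShd j) hδle1)
  have hnormh : ‖h‖ ≤ R' := pi_norm_le_iff_of_nonneg (le_of_lt hR0) |>.mpr hhR
  have hnormSh : ‖fun j => S (h j)‖ ≤ R' + 1 :=
    pi_norm_le_iff_of_nonneg (by linarith) |>.mpr hShR
  have hnormdiff : ‖h - fun j => S (h j)‖ ≤ δ :=
    pi_norm_le_iff_of_nonneg (le_of_lt hδ0) |>.mpr fun j => hShd j
  -- term 1
  have ht1 : ‖g x h - g (S x) h‖ ≤ η * R' ^ k := by
    have e1 : g x h - g (S x) h = (g x - g (S x)) h := by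
      simp [ContinuousMultilinearMap.sub_apply]
    rw [e1]
    calc ‖(g x - g (S x)) h‖ ≤ ‖g x - g (S x)‖ * ∏ j, ‖h j‖ :=
          (g x - g (S x)).le_opNorm h
      _ ≤ η * R' ^ k := by
          refine mul_le_mul hgS ?_ (Finset.prod_nonneg fun j _ => norm_nonneg _)
            (le_of_lt hη0)
          calc (∏ j, ‖h j‖) ≤ ∏ _j : Fin i, R' :=
                Finset.prod_le_prod (fun j _ => norm_nonneg _) (fun j _ => hhR j)
            _ = R' ^ i := by simp
            _ ≤ R' ^ k := pow_le_pow_right₀ hR1 hik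
  -- term 2
  have ht2 : ‖g (S x) h - b‖ ≤ C * δ := by
    calc ‖g (S x) h - b‖ ≤ ‖g (S x)‖ * (Fintype.card (Fin i)) *
          max ‖h‖ ‖fun j => S (h j)‖ ^ (Fintype.card (Fin i) - 1) * ‖h - fun j => S (h j)‖ :=
          (g (S x)).norm_image_sub_le h _
      _ ≤ (M' + 1) * (k : ℝ) * (R' + 1) ^ k * δ := by
          have hmax : max ‖h‖ ‖fun j => S (h j)‖ ≤ R' + 1 :=
            max_le (le_trans hnormh (by linarith)) hnormSh
          have hpow : max ‖h‖ ‖fun j => S (h j)‖ ^ (Fintype.card (Fin i) - 1) ≤ (R' + 1) ^ k := by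
            calc max ‖h‖ ‖fun j => S (h j)‖ ^ (Fintype.card (Fin i) - 1)
                ≤ (R' + 1) ^ (Fintype.card (Fin i) - 1) :=
                  pow_le_pow_left₀ (le_trans (norm_nonneg _) (le_max_left _ _)) hmax _
              _ ≤ (R' + 1) ^ k := pow_le_pow_right₀ (by linarith) (by
                  simp only [Fintype.card_fin]; omega)
          have hcard : ((Fintype.card (Fin i) : ℝ)) ≤ (k : ℝ) := by
            simp only [Fintype.card_fin]; exact_mod_cast hik
          have h1 : ‖g (S x)‖ * (Fintype.card (Fin i)) ≤ (M' + 1) * (k : ℝ) :=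
            mul_le_mul hgSM hcard (by positivity) (by linarith)
          have h2 : ‖g (S x)‖ * (Fintype.card (Fin i)) *
              max ‖h‖ ‖fun j => S (h j)‖ ^ (Fintype.card (Fin i) - 1) ≤
              (M' + 1) * (k : ℝ) * (R' + 1) ^ k :=
            mul_le_mul h1 hpow (by positivity) (by positivity)
          exact mul_le_mul h2 hnormdiff (norm_nonneg _) (by positivity)
      _ = C * δ := by rw [hC]; ring
  -- put everything together
  have hηquarter : η * R' ^ k ≤ ε / 4 := by
    have : η ≤ ε / 4 / R' ^ k := min_le_right _ _
    calc η * R' ^ k ≤ (ε / 4 / R' ^ k) * R' ^ k :=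
          mul_le_mul_of_nonneg_right this (by positivity)
      _ = ε / 4 := div_mul_cancel₀ _ (ne_of_gt (pow_pos hR0 k))
  have hCquarter : C * δ ≤ ε / 4 := by
    calc C * δ ≤ C * (ε / 4 / (C + 1)) := mul_le_mul_of_nonneg_left hδleC hC0
      _ ≤ (C + 1) * (ε / 4 / (C + 1)) := by
          refine mul_le_mul_of_nonneg_right (by linarith) (by positivity)
      _ = ε / 4 := mul_div_cancel₀ _ (by linarith)
  calc ‖g x h - T b‖ ≤ ‖g x h - g (S x) h‖ + ‖g (S x) h - b‖ + ‖b - T b‖ := by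
        have := norm_add₃_le (a := g x h - g (S x) h) (b := g (S x) h - b) (c := b - T b)
        simpa using this
    _ < ε / 4 + ε / 4 + ε / 2 := by
        refine add_lt_add_of_le_of_lt (add_le_add (le_trans ht1 hηquarter)
          (le_trans ht2 hCquarter)) hTb
    _ = ε := by ring
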